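/- Let T be a tree of order n with n ≥ 3. Then φ(T) ≥ ⌈n/2⌉ + 1. -/

import Mathlib

open SimpleGraph

/-- A dissociation set: a set of vertices inducing a subgraph of maximum degree at most 1,
i.e., every vertex of `S` has at most one neighbour inside `S`. -/
def IsDissoc {V : Type*} (G : SimpleGraph V) (S : Set V) : Prop :=
  ∀ v ∈ S, {u | u ∈ S ∧ G.Adj v u}.Subsingleton

/-- A maximal dissociation set: a dissociation set not properly contained in another one. -/
def IsMaxDissoc {V : Type*} (G : SimpleGraph V) (S : Set V) : Prop :=
  IsDissoc G S ∧ ∀ T : Set V, IsDissoc G T → S ⊆ T → S = T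

/-- `phi G` is the number of maximal dissociation sets of `G`. -/
noncomputable def phi {V : Type*} (G : SimpleGraph V) : ℕ :=
  {S : Set V | IsMaxDissoc G S}.ncard

/-- The number of maximal dissociation sets of `G` not containing `u`. -/
noncomputable def phiNot {V : Type*} (G : SimpleGraph V) (u : V) : ℕ :=
  {S : Set V | IsMaxDissoc G S ∧ u ∉ S}.ncard

/-- The number of maximal dissociation sets `S` of `G` with `u ∈ S` and
`u` of degree 0 in the subgraph induced by `S`. -/
noncomputable def phi0 {V : Type*} (G : SimpleGraph V) (u : V) : ℕ :=
  {S : Set V | IsMaxDissoc G S ∧ u ∈ S ∧ ∀ x ∈ S, ¬ G.Adj u x}.ncard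

/-- The number of maximal dissociation sets `S` of `G` with `u ∈ S` and
`u` of degree 1 in the subgraph induced by `S`. -/
noncomputable def phi1 {V : Type*} (G : SimpleGraph V) (u : V) : ℕ :=
  {S : Set V | IsMaxDissoc G S ∧ u ∈ S ∧ ∃! x, x ∈ S ∧ G.Adj u x}.ncard

/-- A unicyclic graph: a connected graph whose number of edges equals its number of vertices
(equivalently, a connected graph with exactly one cycle). -/
def IsUnicyclic {V : Type*} [Fintype V] (G : SimpleGraph V) : Prop :=
  G.Connected ∧ G.edgeSet.ncard = Fintype.card V

/-- The tree `T(p,q)` (for `q ≤ p`): obtained from the star `K_{1,p}` by subdividing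
exactly `q` of its edges.  The centre is `Sum.inl ()`, the `p` neighbours of the centre are
`Sum.inr (Sum.inl i)`, and for `j < q` the vertex `Sum.inr (Sum.inr j)` is the subdivision
pendant attached to the `j`-th neighbour.  It has `1 + p + q` vertices. -/
def treeT (p q : ℕ) (h : q ≤ p) : SimpleGraph (Unit ⊕ Fin p ⊕ Fin q) :=
  SimpleGraph.fromRel fun a b =>
    (∃ i : Fin p, a = Sum.inl () ∧ b = Sum.inr (Sum.inl i)) ∨
    (∃ j : Fin q, a = Sum.inr (Sum.inl (Fin.castLE h j)) ∧ b = Sum.inr (Sum.inr j))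

/-- The unicyclic graph `U(p,q)` (for `q ≤ p`): obtained by identifying one vertex of the
triangle `K₃` with the centre of `T(p,q)`.  The centre is `Sum.inl ()`, the two other triangle
vertices are `Sum.inr (Sum.inl 0)` and `Sum.inr (Sum.inl 1)`, and the copy of `T(p,q)` sits on
the remaining vertices.  It has `3 + p + q` vertices. -/
def graphU (p q : ℕ) (h : q ≤ p) : SimpleGraph (Unit ⊕ Fin 2 ⊕ Fin p ⊕ Fin q) :=
  SimpleGraph.fromRel fun a b =>
    (a = Sum.inl () ∧ b = Sum.inr (Sum.inl 0)) ∨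
    (a = Sum.inl () ∧ b = Sum.inr (Sum.inl 1)) ∨
    (a = Sum.inr (Sum.inl 0) ∧ b = Sum.inr (Sum.inl 1)) ∨
    (∃ i : Fin p, a = Sum.inl () ∧ b = Sum.inr (Sum.inr (Sum.inl i))) ∨
    (∃ j : Fin q, a = Sum.inr (Sum.inr (Sum.inl (Fin.castLE h j))) ∧
      b = Sum.inr (Sum.inr (Sum.inr j)))

/-- The unicyclic graph obtained from the cycle `C_r` by attaching one pendant vertex
`Sum.inr j` to the cycle vertex `Sum.inl (f j)` for each `j : Fin t`.  For injective `f`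
this is a member of the class `𝒰_{r,t}`. -/
def graphUrtF (r t : ℕ) (f : Fin t → Fin r) : SimpleGraph (Fin r ⊕ Fin t) :=
  SimpleGraph.fromRel fun a b =>
    (∃ i j : Fin r, a = Sum.inl i ∧ b = Sum.inl j ∧ (cycleGraph r).Adj i j) ∨
    (∃ j : Fin t, a = Sum.inl (f j) ∧ b = Sum.inr j)

/-- The canonical member `U_{r,t}` of `𝒰_{r,t}` (for `t ≤ r`): the cycle `C_r` with one
pendant vertex attached to each of its first `t` vertices. -/
def graphUrt (r t : ℕ) (h : t ≤ r) : SimpleGraph (Fin r ⊕ Fin t) :=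
  graphUrtF r t (Fin.castLE h)

/-- A caterpillar: a tree in which deleting all vertices of degree 1 leaves a path. -/
def IsCaterpillar {V : Type*} [Fintype V] (G : SimpleGraph V) : Prop :=
  G.IsTree ∧ ∃ m : ℕ,
    Nonempty ((G.induce {v | 2 ≤ (G.neighborSet v).ncard}) ≃g SimpleGraph.pathGraph m)

/-- The graph `G₁` obtained from `U` by adding `k` new pendant vertices
`v₁ = Sum.inr 0, …, v_k = Sum.inr (k-1)`, each adjacent to `w`. -/
def addPendants {V : Type*} (U : SimpleGraph V) (w : V) (k : ℕ) : SimpleGraph (V ⊕ Fin k) :=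
  SimpleGraph.fromRel fun a b =>
    (∃ x y, a = Sum.inl x ∧ b = Sum.inl y ∧ U.Adj x y) ∨
    (∃ j : Fin k, a = Sum.inl w ∧ b = Sum.inr j)

/-- The graph `G₂ = G₁ - w v_k + v₁ v_k`: obtained from `U` by attaching the pendant vertices
`v₁, …, v_{k-1}` to `w` and the vertex `v_k` to `v₁`. -/
def swapPendant {V : Type*} (U : SimpleGraph V) (w : V) (k : ℕ) : SimpleGraph (V ⊕ Fin k) :=
  SimpleGraph.fromRel fun a b =>
    (∃ x y, a = Sum.inl x ∧ b = Sum.inl y ∧ U.Adj x y) ∨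
    (∃ j : Fin k, j.val < k - 1 ∧ a = Sum.inl w ∧ b = Sum.inr j) ∨
    (∃ j₀ j₁ : Fin k, j₀.val = 0 ∧ j₁.val = k - 1 ∧ a = Sum.inr j₀ ∧ b = Sum.inr j₁)

/-- The graph obtained from `H` by attaching a pendant path of length 2 at `w`:
two new vertices `v = Sum.inr 0` and `u = Sum.inr 1` with edges `w v` and `v u`. -/
def addPath2 {V : Type*} (H : SimpleGraph V) (w : V) : SimpleGraph (V ⊕ Fin 2) :=
  SimpleGraph.fromRel fun a b =>
    (∃ x y, a = Sum.inl x ∧ b = Sum.inl y ∧ H.Adj x y) ∨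
    (a = Sum.inl w ∧ b = Sum.inr 0) ∨
    (a = Sum.inr 0 ∧ b = Sum.inr 1)

set_option linter.unusedSectionVars false
set_option linter.unusedVariables false
set_option maxHeartbeats 1000000

section Aux
variable {V : Type*} [Fintype V] {G : SimpleGraph V}

lemma exists_maxDissoc_superset (G : SimpleGraph V) {D : Set V} (hD : IsDissoc G D) :
    ∃ S, IsMaxDissoc G S ∧ D ⊆ S := by
  classical
  have hfin : {S : Set V | IsDissoc G S ∧ D ⊆ S}.Finite := Set.toFinite _
  obtain ⟨S, hS, hmax⟩ := Set.Finite.exists_maximalFor id _ hfin ⟨D, hD, subset_rfl⟩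
  refine ⟨S, ⟨hS.1, ?_⟩, hS.2⟩
  intro T hT hST
  exact hST.antisymm (hmax ⟨hT, hS.2.trans hST⟩ hST)

variable {A : Set V} (hA : ∀ x ∈ A, ∀ y ∈ A, ¬ G.Adj x y)
  (hB : ∀ x, x ∉ A → ∀ y, y ∉ A → ¬ G.Adj x y) {a : V} (ha : a ∈ A)

include hA ha in
lemma caseC1 {b1 b2 : V} (hne : b1 ≠ b2) (h1 : G.Adj a b1) (h2 : G.Adj a b2)
    (hp1 : ∀ c, G.Adj b1 c → c = a) (hp2 : ∀ c, G.Adj b2 c → c = a) :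
    ∃ S, IsMaxDissoc G S ∧ A \ S = {a} := by
  classical
  set D : Set V := (A \ {a}) ∪ {b1, b2} with hDdef
  have hD : IsDissoc G D := by
    have f : ∀ v ∈ D, ∀ u, u ∈ D → G.Adj v u → False := by
      rintro v (hvA | hvb) u huD hadj
      · rcases huD with huA | hub
        · exact hA v hvA.1 u huA.1 hadj
        · rcases hub with rfl | rfl
          · exact hvA.2 (hp1 v hadj.symm)
          · exact hvA.2 (hp2 v hadj.symm)
      · rcases hvb with rfl | rfl
        · have := hp1 u hadj
          subst this
          rcases huD with huA | hub
          · exact huA.2 rfl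
          · rcases hub with h | h
            · exact h1.ne h
            · exact h2.ne h
        · have := hp2 u hadj
          subst this
          rcases huD with huA | hub
          · exact huA.2 rfl
          · rcases hub with h | h
            · exact h1.ne h
            · exact h2.ne h
    rintro v hv u1 ⟨hu1, had1⟩ u2 _
    exact (f v hv u1 hu1 had1).elim
  obtain ⟨S, hS, hDS⟩ := exists_maxDissoc_superset G hD
  have hb1S : b1 ∈ S := hDS (Or.inr (Or.inl rfl))
  have hb2S : b2 ∈ S := hDS (Or.inr (Or.inr rfl))
  have haS : a ∉ S := by
    intro haS
    exact hne (hS.1 a haS ⟨hb1S, h1⟩ ⟨hb2S, h2⟩)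
  refine ⟨S, hS, ?_⟩
  ext y
  constructor
  · rintro ⟨hyA, hyS⟩
    by_contra hy
    rw [Set.mem_singleton_iff] at hy
    exact hyS (hDS (Or.inl ⟨hyA, hy⟩))
  · rintro rfl
    exact ⟨ha, haS⟩

include hA hB ha in
lemma caseC2 {b x : V} (hab : G.Adj a b) (hbx : G.Adj b x) (hxa : x ≠ a)
    (hall : ∀ c, G.Adj b c → c = a ∨ c = x) :
    ∃ S, IsMaxDissoc G S ∧ A \ S = {a} := by
  classical
  have hbA : b ∉ A := fun h => hA a ha b h hab
  have hxA : x ∈ A := by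
    by_contra h
    exact hB b hbA x h hbx
  set D : Set V := (A \ {a}) ∪ {b} with hDdef
  have hD : IsDissoc G D := by
    rintro v hv u1 ⟨hu1, had1⟩ u2 ⟨hu2, had2⟩
    rcases hv with hvA | hvb
    · have f : ∀ u, u ∈ D → G.Adj v u → u = b := by
        rintro u (huA | hub) hadj
        · exact absurd hadj (hA v hvA.1 u huA.1)
        · exact hub
      rw [f u1 hu1 had1, f u2 hu2 had2]
    · rw [Set.mem_singleton_iff] at hvb
      subst hvb
      have f : ∀ u, u ∈ D → G.Adj v u → u = x := by
        rintro u (huA | hub) hadj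
        · rcases hall u hadj with rfl | rfl
          · exact absurd rfl huA.2
          · rfl
        · rw [Set.mem_singleton_iff] at hub
          subst hub
          exact absurd rfl hadj.ne
      rw [f u1 hu1 had1, f u2 hu2 had2]
  obtain ⟨S, hS, hDS⟩ := exists_maxDissoc_superset G hD
  have hbS : b ∈ S := hDS (Or.inr rfl)
  have hxS : x ∈ S := hDS (Or.inl ⟨hxA, hxa⟩)
  have haS : a ∉ S := by
    intro haS
    exact hxa (hS.1 b hbS ⟨hxS, hbx⟩ ⟨haS, hab.symm⟩)
  refine ⟨S, hS, ?_⟩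
  ext y
  constructor
  · rintro ⟨hyA, hyS⟩
    by_contra hy
    rw [Set.mem_singleton_iff] at hy
    exact hyS (hDS (Or.inl ⟨hyA, hy⟩))
  · rintro rfl
    exact ⟨ha, haS⟩

include hA hB ha in
lemma caseC3 {b : V} (hab : G.Adj a b) :
    ∃ S, IsMaxDissoc G S ∧ a ∈ S ∧ A \ S = G.neighborSet b \ {a} := by
  classical
  have hbA : b ∉ A := fun h => hA a ha b h hab
  have hNb : ∀ c, G.Adj b c → c ∈ A := by
    intro c h
    by_contra hc
    exact hB b hbA c hc h
  set D : Set V := {a, b} ∪ (A \ G.neighborSet b) with hDdef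
  have hD : IsDissoc G D := by
    rintro v hv u1 ⟨hu1, had1⟩ u2 ⟨hu2, had2⟩
    rcases hv with (rfl | rfl) | hvX
    · -- v = a : every neighbour in D equals b
      have f : ∀ u, u ∈ D → G.Adj v u → u = b := by
        rintro u ((rfl | rfl) | huX) hadj
        · exact absurd rfl hadj.ne
        · rfl
        · exact absurd hadj (hA v ha u huX.1)
      rw [f u1 hu1 had1, f u2 hu2 had2]
    · -- v = b : every neighbour in D equals a
      have f : ∀ u, u ∈ D → G.Adj v u → u = a := by
        rintro u ((rfl | rfl) | huX) hadj
        · rfl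
        · exact absurd rfl hadj.ne
        · exact absurd hadj huX.2
      rw [f u1 hu1 had1, f u2 hu2 had2]
    · have f : ∀ u, u ∈ D → G.Adj v u → False := by
        rintro u ((rfl | rfl) | huX) hadj
        · exact hA v hvX.1 u ha hadj
        · exact hvX.2 hadj.symm
        · exact hA v hvX.1 u huX.1 hadj
      exact (f u1 hu1 had1).elim
  obtain ⟨S, hS, hDS⟩ := exists_maxDissoc_superset G hD
  have haS : a ∈ S := hDS (Or.inl (Or.inl rfl))
  have hbS : b ∈ S := hDS (Or.inl (Or.inr rfl))
  refine ⟨S, hS, haS, ?_⟩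
  ext y
  constructor
  · rintro ⟨hyA, hyS⟩
    refine ⟨?_, ?_⟩
    · by_contra hy
      exact hyS (hDS (Or.inr ⟨hyA, hy⟩))
    · rintro rfl
      exact hyS haS
  · rintro ⟨hyN, hya⟩
    rw [Set.mem_singleton_iff] at hya
    refine ⟨hNb y hyN, ?_⟩
    intro hyS
    exact hya (hS.1 b hbS ⟨hyS, hyN⟩ ⟨haS, hab.symm⟩)

end Aux
section Key
variable {V : Type*} [Fintype V] {G : SimpleGraph V}

lemma tree_path_length (hT : G.IsTree) {u v : V} {p : G.Walk u v} (hp : p.IsPath) :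
    p.length = G.dist u v := by
  obtain ⟨q, hq, hql⟩ := hT.isConnected.exists_path_of_dist u v
  obtain ⟨r, -, hr⟩ := hT.existsUnique_path u v
  have : p = q := (hr p hp).trans (hr q hq).symm
  rw [this, hql]

lemma adj_dist (hT : G.IsTree) (r : V) {u v : V} (h : G.Adj u v) :
    G.dist r v = G.dist r u + 1 ∨ G.dist r u = G.dist r v + 1 := by
  classical
  obtain ⟨p, hp, hpl⟩ := hT.isConnected.exists_path_of_dist r u
  by_cases hv : v ∈ p.support
  · right
    have h1 : (p.takeUntil v hv).IsPath := hp.takeUntil hv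
    have h2 : (p.dropUntil v hv).IsPath := hp.dropUntil hv
    have hsingle : (Walk.cons h.symm Walk.nil : G.Walk v u).IsPath := by
      simp [Walk.isPath_def, h.symm.ne]
    obtain ⟨q, -, hq⟩ := hT.existsUnique_path v u
    have e1 : p.dropUntil v hv = Walk.cons h.symm Walk.nil := (hq _ h2).trans (hq _ hsingle).symm
    have e2 := congrArg Walk.length (p.take_spec hv)
    rw [Walk.length_append, e1] at e2
    simp only [Walk.length_cons, Walk.length_nil] at e2
    have e3 := tree_path_length hT h1
    omega
  · left
    have hcp : (p.concat h).IsPath := by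
      rw [Walk.isPath_def, Walk.support_concat]
      refine List.Nodup.append hp.support_nodup (List.nodup_singleton v) ?_
      intro x hx hx'
      simp at hx'
      subst hx'
      exact hv hx
    have := tree_path_length hT hcp
    rw [Walk.length_concat] at this
    omega

lemma exists_adj (hc : G.Connected) (h2 : 2 ≤ Fintype.card V) (v : V) : ∃ w, G.Adj v w := by
  obtain ⟨w, hw⟩ := Fintype.exists_ne_of_one_lt_card (by omega) v
  obtain ⟨p⟩ := hc.preconnected v w
  cases p with
  | nil => exact absurd rfl hw
  | cons h q => exact ⟨_, h⟩

lemma walk_confined {a b : V} (ha : ∀ c, G.Adj a c → c = b) (hb : ∀ c, G.Adj b c → c = a) :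
    ∀ {u v : V} (p : G.Walk u v), u = a ∨ u = b → v = a ∨ v = b := by
  intro u v p
  induction p with
  | nil => exact id
  | cons h q ih =>
    intro hu
    apply ih
    rcases hu with rfl | rfl
    · exact Or.inr (ha _ h)
    · exact Or.inl (hb _ h)

variable {A : Set V} (hA : ∀ x ∈ A, ∀ y ∈ A, ¬ G.Adj x y)
  (hB : ∀ x, x ∉ A → ∀ y, y ∉ A → ¬ G.Adj x y) {a : V} (ha : a ∈ A)

include hA hB ha in
lemma key_lemma (hT : G.IsTree) (hn : 3 ≤ Fintype.card V) :
    ∃ S, IsMaxDissoc G S ∧ (A \ S = {a} ∨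
      (a ∈ S ∧ ∃ b, G.Adj a b ∧ A \ S = G.neighborSet b \ {a} ∧
        2 ≤ (G.neighborSet b \ {a}).ncard)) := by
  classical
  obtain ⟨b, hab⟩ := exists_adj hT.isConnected (by omega) a
  have handle : ∀ b', G.Adj a b' → (∃ c, G.Adj b' c ∧ c ≠ a) →
      ∃ S, IsMaxDissoc G S ∧ (A \ S = {a} ∨
        (a ∈ S ∧ ∃ b, G.Adj a b ∧ A \ S = G.neighborSet b \ {a} ∧
          2 ≤ (G.neighborSet b \ {a}).ncard)) := by
    rintro b' hab' ⟨c, hb'c, hca⟩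
    by_cases hd : ∃ d, G.Adj b' d ∧ d ≠ a ∧ d ≠ c
    · obtain ⟨d, hb'd, hda, hdc⟩ := hd
      have h2 : 2 ≤ (G.neighborSet b' \ {a}).ncard := by
        have hsub : ({c, d} : Set V) ⊆ G.neighborSet b' \ {a} := by
          rintro y (rfl | rfl)
          · exact ⟨hb'c, hca⟩
          · exact ⟨hb'd, hda⟩
        calc 2 = ({c, d} : Set V).ncard := (Set.ncard_pair fun h => hdc h.symm).symm
          _ ≤ _ := Set.ncard_le_ncard hsub (Set.toFinite _)
      obtain ⟨S, hS, haS, hM⟩ := caseC3 hA hB ha hab'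
      exact ⟨S, hS, Or.inr ⟨haS, b', hab', hM, h2⟩⟩
    · push_neg at hd
      have hall : ∀ e, G.Adj b' e → e = a ∨ e = c := by
        intro e he
        by_cases h : e = a
        · exact Or.inl h
        · exact Or.inr (hd e he h)
      obtain ⟨S, hS, hM⟩ := caseC2 hA hB ha hab' hb'c hca hall
      exact ⟨S, hS, Or.inl hM⟩
  by_cases hc1 : ∃ c, G.Adj b c ∧ c ≠ a
  · exact handle b hab hc1
  · push_neg at hc1
    by_cases hb2 : ∃ b2, G.Adj a b2 ∧ b2 ≠ b
    · obtain ⟨b2, hab2, hne⟩ := hb2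
      by_cases hc2 : ∃ c, G.Adj b2 c ∧ c ≠ a
      · exact handle b2 hab2 hc2
      · push_neg at hc2
        obtain ⟨S, hS, hM⟩ := caseC1 hA ha hne.symm hab hab2 hc1 hc2
        exact ⟨S, hS, Or.inl hM⟩
    · push_neg at hb2
      exfalso
      have huniv : (Set.univ : Set V) ⊆ {a, b} := by
        intro v _
        obtain ⟨p⟩ := hT.isConnected.preconnected a v
        rcases walk_confined hb2 hc1 p (Or.inl rfl) with rfl | rfl
        · exact Or.inl rfl
        · exact Or.inr rfl
      have hle := Set.ncard_le_ncard huniv (Set.toFinite _)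
      rw [Set.ncard_univ, Nat.card_eq_fintype_card] at hle
      have hab2' : ({a, b} : Set V).ncard ≤ 2 := by
        refine le_trans (Set.ncard_insert_le _ _) ?_
        simp [Set.ncard_singleton]
      omega

end Key
section Assemble
variable {V : Type*} [Fintype V] {G : SimpleGraph V}

lemma main_bound (hT : G.IsTree) (hn : 3 ≤ Fintype.card V)
    {A : Set V} (hA : ∀ x ∈ A, ∀ y ∈ A, ¬ G.Adj x y)
    (hB : ∀ x, x ∉ A → ∀ y, y ∉ A → ¬ G.Adj x y) :
    A.ncard + 1 ≤ phi G := by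
  classical
  have key : ∀ a : V, ∃ S, a ∈ A → IsMaxDissoc G S ∧ (A \ S = {a} ∨
      (a ∈ S ∧ ∃ b, G.Adj a b ∧ A \ S = G.neighborSet b \ {a} ∧
        2 ≤ (G.neighborSet b \ {a}).ncard)) := by
    intro a
    by_cases ha : a ∈ A
    · obtain ⟨S, h⟩ := key_lemma hA hB ha hT hn
      exact ⟨S, fun _ => h⟩
    · exact ⟨∅, fun h => absurd h ha⟩
  choose f hf using key
  obtain ⟨S0, hS0, hAS0⟩ := exists_maxDissoc_superset G (show IsDissoc G A by
    rintro v hv u1 ⟨hu1, had1⟩ u2 _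
    exact absurd had1 (hA v hv u1 hu1))
  have hinj : Set.InjOn f A := by
    intro a ha a' ha' heq
    rcases (hf a ha).2 with g1 | b1 <;> rcases (hf a' ha').2 with g2 | b2
    · have : ({a} : Set V) = {a'} := by rw [← g1, heq, g2]
      exact Set.singleton_eq_singleton_iff.mp this
    · exfalso
      obtain ⟨_, b', _, hM', h2'⟩ := b2
      have : ({a} : Set V).ncard = (G.neighborSet b' \ {a'}).ncard := by
        rw [← g1, heq, hM']
      rw [Set.ncard_singleton] at this
      omega
    · exfalso
      obtain ⟨_, b, _, hM, h2⟩ := b1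
      have : ({a'} : Set V).ncard = (G.neighborSet b \ {a}).ncard := by
        rw [← g2, ← heq, hM]
      rw [Set.ncard_singleton] at this
      omega
    · obtain ⟨haf, b, hab, hM, h2⟩ := b1
      obtain ⟨haf', b', hab', hM', h2'⟩ := b2
      by_contra hne
      have hMM : G.neighborSet b \ {a} = G.neighborSet b' \ {a'} := by
        rw [← hM, heq, hM']
      have haS' : a ∈ f a' := heq ▸ haf
      have hanb' : a ∉ G.neighborSet b' := by
        intro h
        have : a ∈ A \ f a' := by
          rw [hM']
          exact ⟨h, hne⟩
        exact this.2 haS'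
      have hbb' : b ≠ b' := by
        rintro rfl
        exact hanb' hab.symm
      have hx2 : ∃ x ∈ G.neighborSet b \ {a}, ∃ y ∈ G.neighborSet b \ {a}, x ≠ y := by
        rw [← Set.one_lt_ncard (Set.toFinite _)]
        omega
      obtain ⟨x, hx, y, hy, hxy⟩ := hx2
      have hx' : x ∈ G.neighborSet b' := (hMM ▸ hx).1
      have hy' : y ∈ G.neighborSet b' := (hMM ▸ hy).1
      have hbx : G.Adj b x := hx.1
      have hby : G.Adj b y := hy.1
      have hbx' : G.Adj b' x := hx'
      have hby' : G.Adj b' y := hy'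
      set p1 : G.Walk x y := Walk.cons hbx.symm (Walk.cons hby Walk.nil) with hp1def
      set p2 : G.Walk x y := Walk.cons hbx'.symm (Walk.cons hby' Walk.nil) with hp2def
      have hp1 : p1.IsPath := by
        rw [Walk.isPath_def]
        simp [hp1def, hbx.ne', hxy, hby.ne]
      have hp2 : p2.IsPath := by
        rw [Walk.isPath_def]
        simp [hp2def, hbx'.ne', hxy, hby'.ne]
      obtain ⟨q, -, hq⟩ := hT.existsUnique_path x y
      have hpe : p1 = p2 := (hq _ hp1).trans (hq _ hp2).symm
      have := congrArg Walk.support hpe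
      simp [hp1def, hp2def] at this
      exact hbb' this
  have hS0notin : S0 ∉ f '' A := by
    rintro ⟨a, ha, heq⟩
    rcases (hf a ha).2 with g | bd
    · have haD : a ∈ A \ f a := by
        rw [g]
        rfl
      exact haD.2 (heq ▸ hAS0 ha)
    · obtain ⟨_, b, _, hM, h2⟩ := bd
      have hne : (A \ f a).Nonempty := by
        rw [hM]
        exact Set.nonempty_of_ncard_ne_zero (by omega)
      obtain ⟨y, hy⟩ := hne
      exact hy.2 (heq ▸ hAS0 hy.1)
  have hsub : insert S0 (f '' A) ⊆ {S : Set V | IsMaxDissoc G S} := by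
    rintro S (rfl | ⟨a, ha, rfl⟩)
    · exact hS0
    · exact (hf a ha).1
  have h1 : (insert S0 (f '' A)).ncard = (f '' A).ncard + 1 :=
    Set.ncard_insert_of_notMem hS0notin (Set.toFinite _)
  have h2 : (f '' A).ncard = A.ncard := Set.ncard_image_of_injOn hinj
  have h3 := Set.ncard_le_ncard hsub (Set.toFinite _)
  unfold phi
  omega

end Assemble

/-- every tree of order `n ≥ 3` has at least `⌈n/2⌉ + 1`
maximal dissociation sets. -/
theorem stmt4 {V : Type*} [Fintype V] (T : SimpleGraph V) (n : ℕ) (hn : 3 ≤ n)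
    (hcard : Fintype.card V = n) (hT : T.IsTree) :
    (n + 1) / 2 + 1 ≤ phi T := by
  classical
  have hn3 : 3 ≤ Fintype.card V := by omega
  have hne : Nonempty V := Fintype.card_pos_iff.mp (by omega)
  obtain ⟨r⟩ := hne
  set A0 : Set V := {v | T.dist r v % 2 = 0} with hA0def
  have hopp : ∀ u v, T.Adj u v → (T.dist r u % 2 = 0 ↔ ¬ T.dist r v % 2 = 0) := by
    intro u v h
    rcases adj_dist hT r h with h1 | h1 <;> omega
  have hA0 : ∀ x ∈ A0, ∀ y ∈ A0, ¬ T.Adj x y := by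
    intro x hx y hy hadj
    have h := hopp x y hadj
    simp only [hA0def, Set.mem_setOf_eq] at hx hy
    tauto
  have hB0 : ∀ x, x ∉ A0 → ∀ y, y ∉ A0 → ¬ T.Adj x y := by
    intro x hx y hy hadj
    have h := hopp x y hadj
    simp only [hA0def, Set.mem_setOf_eq] at hx hy
    tauto
  have hcardsum : A0.ncard + A0ᶜ.ncard = n := by
    have h := Set.ncard_add_ncard_compl A0 (Set.toFinite _) (Set.toFinite _)
    rwa [Nat.card_eq_fintype_card, hcard] at h
  rcases le_or_gt ((n + 1) / 2) A0.ncard with hbig | hbig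
  · have := main_bound hT hn3 hA0 hB0
    omega
  · have hA0c : ∀ x ∈ A0ᶜ, ∀ y ∈ A0ᶜ, ¬ T.Adj x y := fun x hx y hy => hB0 x hx y hy
    have hB0c : ∀ x, x ∉ A0ᶜ → ∀ y, y ∉ A0ᶜ → ¬ T.Adj x y := fun x hx y hy =>
      hA0 x (Set.not_notMem.mp hx) y (Set.not_notMem.mp hy)
    have hsz : (n + 1) / 2 ≤ A0ᶜ.ncard := by omega
    have := main_bound hT hn3 hA0c hB0c
    omega
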